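/- Let E be a real inner product space and σ : [−1,1] → E a C² curve. Set M := sup_{t ∈ [−1,1]} ‖σ′(t)‖, assume M > 0 and ‖σ″(t)‖ ≤ M/6 for every t ∈ [−1,1]. Then for all s, t ∈ [−1,1], sin ∠(σ′(s), σ′(t)) < 1/2. -/

import Mathlib

/-- For a C² curve `σ : [−1,1] → E` into a real inner product space with
`M = sup ‖σ′‖ > 0` and `‖σ″(t)‖ ≤ M/6` on `[−1,1]`, the tangent vectors satisfy
`sin ∠(σ′(s), σ′(t)) < 1/2` for all `s, t ∈ [−1,1]`. -/
theorem stmt_3 {E : Type*} [NormedAddCommGroup E] [InnerProductSpace ℝ E]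
    (σ σ' σ'' : ℝ → E) (M : ℝ)
    (hM : M = ⨆ t : Set.Icc (-1:ℝ) 1, ‖σ' t.1‖) (hMpos : 0 < M)
    (hd1 : ∀ t ∈ Set.Icc (-1:ℝ) 1, HasDerivWithinAt σ (σ' t) (Set.Icc (-1:ℝ) 1) t)
    (hd2 : ∀ t ∈ Set.Icc (-1:ℝ) 1, HasDerivWithinAt σ' (σ'' t) (Set.Icc (-1:ℝ) 1) t)
    (hbd : ∀ t ∈ Set.Icc (-1:ℝ) 1, ‖σ'' t‖ ≤ M / 6) :
    ∀ s ∈ Set.Icc (-1:ℝ) 1, ∀ t ∈ Set.Icc (-1:ℝ) 1,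
      Real.sin (InnerProductGeometry.angle (σ' s) (σ' t)) < 1 / 2 := by
  intro s hs t ht
  have hconv : Convex ℝ (Set.Icc (-1:ℝ) 1) := convex_Icc _ _
  -- Lipschitz-type bound on σ'
  have hdiff : ∀ a ∈ Set.Icc (-1:ℝ) 1, ∀ b ∈ Set.Icc (-1:ℝ) 1,
      ‖σ' b - σ' a‖ ≤ M / 3 := by
    intro a ha b hb
    have h1 : ‖σ' b - σ' a‖ ≤ M / 6 * ‖b - a‖ :=
      hconv.norm_image_sub_le_of_norm_hasDerivWithin_le hd2 hbd ha hb
    have h2 : ‖b - a‖ ≤ 2 := by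
      rw [Real.norm_eq_abs, abs_sub_le_iff]
      constructor <;> [linarith [hb.1, hb.2, ha.1, ha.2]; linarith [hb.1, hb.2, ha.1, ha.2]]
    nlinarith
  -- lower bound on ‖σ' a‖
  have hlow : ∀ a ∈ Set.Icc (-1:ℝ) 1, 2 * M / 3 ≤ ‖σ' a‖ := by
    intro a ha
    haveI : Nonempty (Set.Icc (-1:ℝ) 1) := ⟨⟨0, by norm_num⟩⟩
    have hle : (⨆ t : Set.Icc (-1:ℝ) 1, ‖σ' t.1‖) ≤ ‖σ' a‖ + M / 3 := by
      apply ciSup_le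
      intro u
      have h1 := hdiff a ha u.1 u.2
      calc ‖σ' u.1‖ = ‖σ' a + (σ' u.1 - σ' a)‖ := by
            rw [show σ' a + (σ' u.1 - σ' a) = σ' u.1 from by abel]
        _ ≤ ‖σ' a‖ + ‖σ' u.1 - σ' a‖ := norm_add_le _ _
        _ ≤ ‖σ' a‖ + M / 3 := by linarith
    rw [← hM] at hle
    linarith
  set u := σ' s
  set v := σ' t
  have ha : 2 * M / 3 ≤ ‖u‖ := hlow s hs
  have hb : 2 * M / 3 ≤ ‖v‖ := hlow t ht
  have hd : ‖u - v‖ ≤ M / 3 := by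
    have := hdiff t ht s hs
    simpa using this
  have hab : (0:ℝ) < ‖u‖ * ‖v‖ :=
    mul_pos (lt_of_lt_of_le (by linarith) ha) (lt_of_lt_of_le (by linarith) hb)
  have hsq : ‖u - v‖ ^ 2 = ‖u‖ ^ 2 - 2 * inner ℝ u v + ‖v‖ ^ 2 :=
    @norm_sub_sq_real E _ _ u v
  have hinner : (7 : ℝ) / 8 * (‖u‖ * ‖v‖) ≤ inner ℝ u v := by
    nlinarith [sq_nonneg (‖u‖ - ‖v‖), norm_nonneg (u - v), sq_nonneg (‖u - v‖)]
  have hcos : (7 : ℝ) / 8 ≤ Real.cos (InnerProductGeometry.angle u v) := by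
    rw [InnerProductGeometry.cos_angle]
    rw [le_div_iff₀ hab]
    exact hinner
  have hsin0 : 0 ≤ Real.sin (InnerProductGeometry.angle u v) :=
    Real.sin_nonneg_of_nonneg_of_le_pi (InnerProductGeometry.angle_nonneg u v)
      (InnerProductGeometry.angle_le_pi u v)
  have hpyth := Real.sin_sq_add_cos_sq (InnerProductGeometry.angle u v)
  nlinarith [hcos, hsin0, hpyth]
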